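/- With R = ℤ/pℤ[t,t⁻¹] (p > 1) and B = [[-t⁻¹,1,0],[0,1,0],[0,1,-t]]: for every v ∈ X₂ (all coordinates nonzero of equal lowest degree) and every n ≥ 2, the vector Bⁿv lies in X₁ (ping-pong inclusion BⁿX₂ ⊆ X₁ for n ≥ 2). -/

import Mathlib

open LaurentPolynomial

/-- lowest degree of `f` is at least `n` (ord 0 = +∞). -/
def ordGE {R : Type*} [CommRing R] (f : LaurentPolynomial R) (n : ℤ) : Prop :=
  ∀ m : ℤ, m < n → f.coeff m = 0

/-- lowest degree of `f` is exactly `n`. -/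
def ordEq {R : Type*} [CommRing R] (f : LaurentPolynomial R) (n : ℤ) : Prop :=
  f.coeff n ≠ 0 ∧ ordGE f n

noncomputable def Bm (p : ℕ) : Matrix (Fin 3) (Fin 3) (LaurentPolynomial (ZMod p)) :=
  !![-T (-1), 1, 0;
     0, 1, 0;
     0, 1, -T 1]

lemma T_mul_apply {R : Type*} [CommRing R] (k m : ℤ) (f : LaurentPolynomial R) :
    ((T k * f : LaurentPolynomial R)).coeff m = f.coeff (m - k) := by
  rw [show (T k : LaurentPolynomial R) = AddMonoidAlgebra.single k 1 from rfl,
    AddMonoidAlgebra.coeff_single_mul_apply, one_mul, neg_add_eq_sub]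

lemma coeff_add' {R : Type*} [CommRing R] (f g : LaurentPolynomial R) (m : ℤ) :
    (f + g).coeff m = f.coeff m + g.coeff m := rfl

lemma coeff_neg' {R : Type*} [CommRing R] (f : LaurentPolynomial R) (m : ℤ) :
    (-f).coeff m = -(f.coeff m) := rfl

/-- The key induction: after n steps, component 0 has ord N - n, the others ord N. -/
lemma Bpow_aux (p : ℕ) (v : Fin 3 → LaurentPolynomial (ZMod p)) (N : ℤ)
    (h0 : ordEq (v 0) N) (h1 : ordEq (v 1) N) (h2 : ordEq (v 2) N) (n : ℕ) :
    ordEq (((Bm p) ^ n).mulVec v 0) (N - n) ∧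
      ordEq (((Bm p) ^ n).mulVec v 1) N ∧
      ordEq (((Bm p) ^ n).mulVec v 2) N := by
  induction n with
  | zero => simpa [Matrix.mulVec_one] using ⟨h0, h1, h2⟩
  | succ n ih =>
    obtain ⟨⟨w00, w0⟩, ⟨w10, w1⟩, ⟨w20, w2⟩⟩ := ih
    set w := ((Bm p) ^ n).mulVec v with hw
    have hstep : ((Bm p) ^ (n + 1)).mulVec v = (Bm p).mulVec w := by
      rw [pow_succ', Matrix.mulVec_mulVec]
    have e0 : (Bm p).mulVec w 0 = -(T (-1) * w 0) + w 1 := by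
      simp [Bm, Matrix.mulVec, dotProduct, Fin.sum_univ_three]
    have e1 : (Bm p).mulVec w 1 = w 1 := by
      simp [Bm, Matrix.mulVec, dotProduct, Fin.sum_univ_three]
    have e2 : (Bm p).mulVec w 2 = w 1 + -(T 1 * w 2) := by
      simp [Bm, Matrix.mulVec, dotProduct, Fin.sum_univ_three]
    rw [hstep, e0, e1, e2]
    push_cast
    refine ⟨⟨?_, ?_⟩, ⟨w10, w1⟩, ⟨?_, ?_⟩⟩
    · -- coefficient at N - (n+1)
      have hlt : N - (n + 1) < N := by
        have : (0:ℤ) < n + 1 := by positivity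
        linarith
      simp only [coeff_add', coeff_neg', T_mul_apply]
      rw [w1 _ hlt]
      have : N - (n + 1) - (-1) = N - n := by ring
      rw [this, add_zero, neg_ne_zero]
      exact w00
    · intro m hm
      simp only [coeff_add', coeff_neg', T_mul_apply]
      rw [w0 (m - (-1)) (by linarith), w1 m (by linarith), neg_zero, add_zero]
    · -- coefficient of component 2 at N
      simp only [coeff_add', coeff_neg', T_mul_apply]
      rw [w2 (N - 1) (by linarith), neg_zero, add_zero]
      exact w10
    · intro m hm
      simp only [coeff_add', coeff_neg', T_mul_apply]
      rw [w1 m hm, w2 (m - 1) (by linarith), neg_zero, add_zero]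

/-- Ping-pong inclusion: Bⁿ X₂ ⊆ X₁ for n ≥ 2. -/
theorem Bpow_X2_subset_X1 (p : ℕ) [Fact (1 < p)]
    (v : Fin 3 → LaurentPolynomial (ZMod p)) (N : ℤ)
    (h0 : ordEq (v 0) N) (h1 : ordEq (v 1) N) (h2 : ordEq (v 2) N)
    (n : ℕ) (hn : 2 ≤ n) :
    ∃ m : ℤ, ordEq (((Bm p) ^ n).mulVec v 0) m ∧
      ordGE (((Bm p) ^ n).mulVec v 1) (m + 2) ∧
      ordGE (((Bm p) ^ n).mulVec v 2) (m + 2) := by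
  obtain ⟨H0, H1, H2⟩ := Bpow_aux p v N h0 h1 h2 n
  have h2n : (2:ℤ) ≤ n := by exact_mod_cast hn
  refine ⟨N - n, H0, ?_, ?_⟩ <;> intro m hm
  · exact H1.2 m (by linarith)
  · exact H2.2 m (by linarith)
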